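/- Let S be a Cu-semigroup and let x, y be full elements of S. Then: (1) if rc(S, x) < ∞ and λ(y) ∈ {0, ∞} for every λ ∈ F(S), then rc(S, y) = 0; (2) if rc(S, x) < ∞, then rc(S, ∞·x) = 0. -/

import Mathlib

open scoped ENNReal

/-- `x' ≪ x`: for every increasing sequence whose supremum is `≥ x`,
some term of the sequence dominates `x'`. -/
def CuWayBelow {S : Type*} [Preorder S] (x' x : S) : Prop :=
  ∀ f : ℕ → S, Monotone f → ∀ s : S, IsLUB (Set.range f) s → x ≤ s → ∃ n, x' ≤ f n

/-- A `Cu`-semigroup: a partially ordered abelian monoid whose least element is `0`,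
satisfying the axioms (O1)–(O4). -/
class CuSemigroup (S : Type*) extends AddCommMonoid S, PartialOrder S, IsOrderedAddMonoid S where
  zero_le : ∀ x : S, 0 ≤ x
  O1 : ∀ f : ℕ → S, Monotone f → ∃ s : S, IsLUB (Set.range f) s
  O2 : ∀ x : S, ∃ f : ℕ → S, (∀ n, CuWayBelow (f n) (f (n + 1))) ∧ IsLUB (Set.range f) x
  O3 : ∀ {x' x y' y : S}, CuWayBelow x' x → CuWayBelow y' y → CuWayBelow (x' + y') (x + y)
  O4 : ∀ f g : ℕ → S, Monotone f → Monotone g → ∀ a b : S,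
      IsLUB (Set.range f) a → IsLUB (Set.range g) b →
      IsLUB (Set.range fun n => f n + g n) (a + b)

/-- A functional on a `Cu`-semigroup: a map `S → [0,∞]` which is additive, order
preserving, sends `0` to `0`, and preserves suprema of increasing sequences. -/
structure IsCuFunctional {S : Type*} [CuSemigroup S] (Λ : S → ℝ≥0∞) : Prop where
  map_zero : Λ 0 = 0
  map_add : ∀ x y : S, Λ (x + y) = Λ x + Λ y
  mono : Monotone Λ
  map_sup : ∀ f : ℕ → S, Monotone f → ∀ s : S, IsLUB (Set.range f) s → Λ s = ⨆ n, Λ (f n)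

/-- `x` is full if `∞ · x = sup_n (n • x)` is the largest element of `S`. -/
def IsFull {S : Type*} [CuSemigroup S] (x : S) : Prop :=
  ∀ s : S, IsLUB (Set.range fun n : ℕ => n • x) s → ∀ y : S, y ≤ s

/-- `F_w(S) ≠ ∅`: there exists a functional normalized at `w`. -/
def FNormNonempty {S : Type*} [CuSemigroup S] (w : S) : Prop :=
  ∃ Λ : S → ℝ≥0∞, IsCuFunctional Λ ∧ Λ w = 1

/-- The rank ratio `ρ(x, y)`: the infimum of all `r ∈ (0,∞)` with
`λ(x) ≤ r·λ(y)` for every functional `λ`; `∞` if there is no such `r`. -/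
noncomputable def rankRatio {S : Type*} [CuSemigroup S] (x y : S) : ℝ≥0∞ :=
  sInf {r : ℝ≥0∞ | 0 < r ∧ r ≠ ⊤ ∧ ∀ Λ : S → ℝ≥0∞, IsCuFunctional Λ → Λ x ≤ r * Λ y}

/-- `S` has `r`-comparison relative to `w`. -/
def HasRComparison {S : Type*} [CuSemigroup S] (r : ℝ≥0∞) (w : S) : Prop :=
  ∀ x y : S, (∀ Λ : S → ℝ≥0∞, IsCuFunctional Λ → Λ x + r * Λ w ≤ Λ y) → x ≤ y

/-- The radius of comparison of `S` relative to `w`: the infimum of all `r ∈ (0,∞)`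
for which `S` has `r`-comparison relative to `w`; `∞` if there is no such `r`. -/
noncomputable def rc {S : Type*} [CuSemigroup S] (w : S) : ℝ≥0∞ :=
  sInf {r : ℝ≥0∞ | 0 < r ∧ r ≠ ⊤ ∧ HasRComparison r w}

section Aux

variable {S : Type*} [CuSemigroup S]

lemma nsmul_mono (w : S) : Monotone (fun n : ℕ => n • w) := by
  apply monotone_nat_of_le_succ
  intro n
  simp only [succ_nsmul]
  exact le_add_of_nonneg_right (CuSemigroup.zero_le w)

lemma map_nsmul' {Λ : S → ℝ≥0∞} (hΛ : IsCuFunctional Λ) (w : S) (n : ℕ) :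
    Λ (n • w) = n * Λ w := by
  induction n with
  | zero => simp [hΛ.map_zero]
  | succ n ih =>
    rw [succ_nsmul, hΛ.map_add, ih]
    push_cast
    ring

lemma key {x w : S} (hrx : rc x ≠ ⊤) (hw : IsFull w)
    (h0 : ∀ Λ : S → ℝ≥0∞, IsCuFunctional Λ → Λ w = 0 ∨ Λ w = ⊤) : rc w = 0 := by
  -- get r-comparison for x
  have hne : {r : ℝ≥0∞ | 0 < r ∧ r ≠ ⊤ ∧ HasRComparison r x}.Nonempty := by
    by_contra h
    rw [Set.not_nonempty_iff_eq_empty] at h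
    exact hrx (by simp [rc, h])
  obtain ⟨r, hr0, hrt, hrc⟩ := hne
  refine le_antisymm ?_ zero_le
  refine ENNReal.le_of_forall_pos_le_add fun ε hε _ => ?_
  rw [zero_add]
  refine sInf_le ⟨by exact_mod_cast hε, ENNReal.coe_ne_top, ?_⟩
  intro a b hab
  apply hrc a b
  intro Λ hΛ
  rcases h0 Λ hΛ with h | h
  · -- Λ vanishes on everything since w is full
    obtain ⟨t, ht⟩ := CuSemigroup.O1 (fun n : ℕ => n • w) (nsmul_mono w)
    have hΛt : Λ t = 0 := by
      rw [hΛ.map_sup _ (nsmul_mono w) t ht]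
      simp [map_nsmul' hΛ, h]
    have hz : ∀ z : S, Λ z = 0 := fun z =>
      le_antisymm (hΛt ▸ hΛ.mono (hw t ht z)) (by simp)
    simp [hz a, hz x, hz b]
  · have := hab Λ hΛ
    rw [h, ENNReal.mul_top (by exact_mod_cast hε.ne')] at this
    simp only [add_top, top_le_iff] at this
    simp [this]

end Aux

/-- Proposition (rcProperties, parts (4)-(5)): for full elements `x, y`:
(1) if `rc(S,x) < ∞` and `λ(y) ∈ {0, ∞}` for every functional `λ`, then
`rc(S,y) = 0`;
(2) if `rc(S,x) < ∞`, then `rc(S, ∞·x) = 0`. -/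
theorem stmt15 {S : Type*} [CuSemigroup S] (x y : S)
    (hx : IsFull x) (hy : IsFull y) :
    (rc x ≠ ⊤ → (∀ Λ : S → ℝ≥0∞, IsCuFunctional Λ → Λ y = 0 ∨ Λ y = ⊤) → rc y = 0) ∧
      (rc x ≠ ⊤ →
        ∀ s : S, IsLUB (Set.range fun n : ℕ => n • x) s → rc s = 0) := by
  constructor
  · intro hrx h0
    exact key hrx hy h0
  · intro hrx s hs
    have hsf : IsFull s := by
      intro t ht z
      have hst : s ≤ t := ht.1 ⟨1, by simp⟩
      exact (hx s hs z).trans hst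
    refine key hrx hsf ?_
    intro Λ hΛ
    have : Λ s = ⨆ n : ℕ, (n : ℝ≥0∞) * Λ x := by
      rw [hΛ.map_sup _ (nsmul_mono x) s hs]
      simp [map_nsmul' hΛ]
    rcases eq_or_ne (Λ x) 0 with h | h
    · left; simp [this, h]
    · right
      rw [this, ← ENNReal.iSup_mul]
      have : ⨆ n : ℕ, (n : ℝ≥0∞) = ⊤ := by
        simp [ENNReal.iSup_natCast]
      rw [this, ENNReal.top_mul h]
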